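/- arXiv:1811.05677 — 2 statements merged into one kernel-verified Lean document; each statement's English description precedes it below -/
import Mathlib

section
/- For every closure model M and all formulas F₁, F₂ of SLCS, the formula F₁ S F₂ (surrounded) is logically equivalent to F₁ ∧ ¬ρ(¬(F₁ ∨ F₂))[¬F₂]: a point x satisfies the surrounded formula if and only if x satisfies F₁ and x does not satisfy 'may reach a point satisfying ¬(F₁ ∨ F₂) through points satisfying ¬F₂'. -/
/-- `π` is a path for relation `R`. -/
def IsPath {X : Type*} (R : X → X → Prop) (π : ℕ → X) : Prop :=
  ∀ i : ℕ, R (π i) (π (i + 1))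

/-- `x` may reach a point of `A` through points of `B`. -/
def MayReach {X : Type*} (R : X → X → Prop) (A B : Set X) (x : X) : Prop :=
  ∃ (π : ℕ → X) (ℓ : ℕ), IsPath R π ∧ π 0 = x ∧ π ℓ ∈ A ∧
    ∀ j : ℕ, 0 < j → j < ℓ → π j ∈ B

/-- `x` satisfies `A` surrounded by `B`. -/
def Surrounded {X : Type*} (R : X → X → Prop) (A B : Set X) (x : X) : Prop :=
  x ∈ A ∧ ∀ (π : ℕ → X) (ℓ : ℕ), IsPath R π → π 0 = x → π ℓ ∉ A →
    ∃ j : ℕ, 0 < j ∧ j ≤ ℓ ∧ π j ∈ B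

theorem surrounded_iff_not_mayReach {X : Type*} (R : X → X → Prop)
    (hrefl : ∀ x : X, R x x) (A B : Set X) (x : X) :
    Surrounded R A B x ↔
      (x ∈ A ∧ ¬ MayReach R ((A ∪ B)ᶜ) Bᶜ x) := by
  constructor
  · rintro ⟨hxA, hS⟩
    refine ⟨hxA, ?_⟩
    rintro ⟨π, ℓ, hπ, h0, hℓ, hmid⟩
    have hℓA : π ℓ ∉ A := fun h => hℓ (Or.inl h)
    obtain ⟨j, hj0, hjℓ, hjB⟩ := hS π ℓ hπ h0 hℓA
    rcases lt_or_eq_of_le hjℓ with h | h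
    · exact hmid j hj0 h hjB
    · exact hℓ (h ▸ Or.inr hjB)
  · rintro ⟨hxA, hM⟩
    refine ⟨hxA, fun π ℓ hπ h0 hℓ => ?_⟩
    by_contra hno
    push_neg at hno
    have hℓpos : 0 < ℓ := by
      rcases Nat.eq_zero_or_pos ℓ with h | h
      · exact absurd (h ▸ h0 ▸ hxA) (h ▸ hℓ)
      · exact h
    exact hM ⟨π, ℓ, hπ, h0,
      fun h => h.elim hℓ (hno ℓ hℓpos le_rfl),
      fun j hj0 hjℓ => hno j hj0 (le_of_lt hjℓ)⟩
end

section
/- In a quasi-discrete closure space with reflexive symmetric relation R, the set of points satisfying ρ A [B] ('may reach A through B') equals (N A) ∪ (N C), where N is the closure operator applied to a satisfaction set, and C is the union of all R-connected components of B that contain at least one point of N A. (Here the claim to prove: x satisfies ρ A [B] iff x ∈ C_R(A), or x ∈ C_R(C) where C is the union of connected components of B meeting C_R(A).) -/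
/-- The quasi-discrete closure operator generated by a relation `R`. -/
def CR {X : Type*} (R : X → X → Prop) (Y : Set X) : Set X :=
  Y ∪ {x | ∃ y ∈ Y, R y x}

/-- `R` restricted to the set `B`. -/
def RestrictRel {X : Type*} (R : X → X → Prop) (B : Set X) (a b : X) : Prop :=
  a ∈ B ∧ b ∈ B ∧ R a b

/-- Union of the connected components of `B` (w.r.t. the reflexive-transitive
closure of `R` restricted to `B`) containing at least one point of `C_R(A)`. -/
def CompsMeeting {X : Type*} (R : X → X → Prop) (A B : Set X) : Set X :=
  {y | y ∈ B ∧ ∃ z, Relation.ReflTransGen (RestrictRel R B) y z ∧ z ∈ CR R A}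

lemma mayReach_of_mem_CR {X : Type*} {R : X → X → Prop}
    (hrefl : ∀ x : X, R x x) (hsymm : ∀ x y : X, R x y → R y x)
    {A : Set X} (B : Set X) {x : X} (hx : x ∈ CR R A) : MayReach R A B x := by
  rcases hx with hx | ⟨y, hy, hRyx⟩
  · exact ⟨fun _ => x, 0, fun _ => hrefl x, rfl, hx, fun j hj hj' => absurd hj' (by omega)⟩
  · refine ⟨fun n => if n = 0 then x else y, 1, ?_, rfl, by simp [hy], ?_⟩
    · intro i
      rcases Nat.eq_zero_or_pos i with h | h
      · simpa [h] using hsymm _ _ hRyx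
      · simp only [Nat.pos_iff_ne_zero.mp h, if_neg (by omega : i + 1 ≠ 0),
          if_neg (Nat.pos_iff_ne_zero.mp h)]
        exact hrefl y
    · intro j hj hj'; omega

lemma mayReach_head {X : Type*} {R : X → X → Prop}
    {A B : Set X} {x y : X} (hR : R x y) (hyB : y ∈ B)
    (h : MayReach R A B y) : MayReach R A B x := by
  obtain ⟨π, ℓ, hpath, h0, hℓ, hB⟩ := h
  refine ⟨fun n => if n = 0 then x else π (n - 1), ℓ + 1, ?_, rfl, ?_, ?_⟩
  · intro i
    rcases Nat.eq_zero_or_pos i with h | h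
    · simpa [h, h0] using hR
    · simp only [if_neg (Nat.pos_iff_ne_zero.mp h), if_neg (by omega : i + 1 ≠ 0)]
      have : i + 1 - 1 = (i - 1) + 1 := by omega
      rw [this]
      exact hpath (i - 1)
  · simpa using hℓ
  · intro j hj hj'
    simp only [if_neg (by omega : j ≠ 0)]
    rcases Nat.eq_or_lt_of_le (Nat.one_le_iff_ne_zero.mpr (by omega : j ≠ 0)) with h | h
    · rw [← h]; simpa [h0] using hyB
    · exact hB (j - 1) (by omega) (by omega)

lemma mayReach_of_chain {X : Type*} {R : X → X → Prop}
    (hrefl : ∀ x : X, R x x) (hsymm : ∀ x y : X, R x y → R y x)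
    {A B : Set X} {y z : X}
    (h : Relation.ReflTransGen (RestrictRel R B) y z) (hz : z ∈ CR R A) :
    MayReach R A B y := by
  induction h using Relation.ReflTransGen.head_induction_on with
  | refl => exact mayReach_of_mem_CR hrefl hsymm B hz
  | head hstep _ ih => exact mayReach_head hstep.2.2 hstep.2.1 ih

theorem mayReach_eq_closure_components {X : Type*} [Fintype X]
    (R : X → X → Prop) (hrefl : ∀ x : X, R x x)
    (hsymm : ∀ x y : X, R x y → R y x) (A B : Set X) (x : X) :
    MayReach R A B x ↔
      x ∈ CR R A ∪ CR R (CompsMeeting R A B) := by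
  constructor
  · rintro ⟨π, ℓ, hpath, h0, hℓ, hB⟩
    match ℓ, hℓ, hB with
    | 0, hℓ, hB => exact Or.inl (Or.inl (h0 ▸ hℓ))
    | 1, hℓ, hB =>
      exact Or.inl (Or.inr ⟨π 1, hℓ, h0 ▸ hsymm _ _ (hpath 0)⟩)
    | (ℓ + 2), hℓ, hB =>
      right
      have hchain : ∀ k, 1 ≤ k → k ≤ ℓ + 1 →
          Relation.ReflTransGen (RestrictRel R B) (π 1) (π k) := by
        intro k hk
        induction k, hk using Nat.le_induction with
        | base => intro _; exact Relation.ReflTransGen.refl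
        | succ k hk ih =>
          intro hk'
          exact (ih (by omega)).tail
            ⟨hB k (by omega) (by omega), hB (k + 1) (by omega) (by omega), hpath k⟩
      have hmem : π 1 ∈ CompsMeeting R A B := by
        refine ⟨hB 1 one_pos (by omega), π (ℓ + 1), hchain (ℓ + 1) (by omega) le_rfl, ?_⟩
        exact Or.inr ⟨π (ℓ + 2), hℓ, hsymm _ _ (hpath (ℓ + 1))⟩
      exact Or.inr ⟨π 1, hmem, h0 ▸ hsymm _ _ (hpath 0)⟩
  · rintro (hx | hx)
    · exact mayReach_of_mem_CR hrefl hsymm B hx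
    · rcases hx with ⟨hxB, z, hchain, hz⟩ | ⟨y, ⟨hyB, z, hchain, hz⟩, hRyx⟩
      · exact mayReach_of_chain hrefl hsymm hchain hz
      · exact mayReach_head (hsymm _ _ hRyx) hyB
          (mayReach_of_chain hrefl hsymm hchain hz)
end
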